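/- Let V : [t0,t1] → ℝ³ be C³ and suppose V''(t) = V'(t) × V(t) + C for all t ∈ [t0,t1], where C ∈ ℝ³ is constant. Then for all t ∈ [t0,t1], ⟨V'''(t), V'(t)⟩ = ⟨C, V''(t)⟩ − ‖V''(t)‖². -/

import Mathlib

noncomputable section
open scoped RealInnerProductSpace

/-- `ℝ³` with the Euclidean inner product. -/
abbrev E3 : Type := EuclideanSpace ℝ (Fin 3)

/-- The cross product on `ℝ³`; with `⁅u,v⁆ := cross u v`, `ℝ³` is the Lie algebra `so(3)`. -/
def cross (u v : E3) : E3 :=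
  (WithLp.equiv 2 (Fin 3 → ℝ)).symm
    ![u 1 * v 2 - u 2 * v 1, u 2 * v 0 - u 0 * v 2, u 0 * v 1 - u 1 * v 0]

lemma crossE3_apply (u v : E3) (i : Fin 3) :
    cross u v i = ![u 1 * v 2 - u 2 * v 1, u 2 * v 0 - u 0 * v 2, u 0 * v 1 - u 1 * v 0] i := rfl

/-- The cross product as a bilinear map. -/
def crossLM : E3 →ₗ[ℝ] E3 →ₗ[ℝ] E3 :=
  LinearMap.mk₂ ℝ cross
    (by intro u u' v; ext i; fin_cases i <;>
      simp [crossE3_apply, PiLp.add_apply] <;> ring)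
    (by intro c u v; ext i; fin_cases i <;>
      simp [crossE3_apply, PiLp.smul_apply, smul_eq_mul] <;> ring)
    (by intro u v v'; ext i; fin_cases i <;>
      simp [crossE3_apply, PiLp.add_apply] <;> ring)
    (by intro c u v; ext i; fin_cases i <;>
      simp [crossE3_apply, PiLp.smul_apply, smul_eq_mul] <;> ring)

/-- The cross product as a continuous bilinear map. -/
def crossCLM : E3 →L[ℝ] E3 →L[ℝ] E3 :=
  LinearMap.toContinuousLinearMap
    ((LinearMap.toContinuousLinearMap :
        (E3 →ₗ[ℝ] E3) ≃ₗ[ℝ] (E3 →L[ℝ] E3)).toLinearMap ∘ₗ crossLM)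

lemma crossCLM_apply (u v : E3) : crossCLM u v = cross u v := rfl

theorem stmt_2 (t0 t1 : ℝ) (ht : t0 < t1) (V : ℝ → E3) (C : E3)
    (hV : ContDiffOn ℝ 3 V (Set.Icc t0 t1))
    (hLQ : ∀ t ∈ Set.Icc t0 t1,
        iteratedDerivWithin 2 V (Set.Icc t0 t1) t =
          cross (iteratedDerivWithin 1 V (Set.Icc t0 t1) t) (V t) + C) :
    ∀ t ∈ Set.Icc t0 t1,
      ⟪iteratedDerivWithin 3 V (Set.Icc t0 t1) t,
          iteratedDerivWithin 1 V (Set.Icc t0 t1) t⟫ =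
        ⟪C, iteratedDerivWithin 2 V (Set.Icc t0 t1) t⟫ -
          ‖iteratedDerivWithin 2 V (Set.Icc t0 t1) t‖ ^ 2 := by
  intro t htmem
  set s := Set.Icc t0 t1 with hs_def
  have hs : UniqueDiffOn ℝ s := uniqueDiffOn_Icc ht
  have hst : UniqueDiffWithinAt ℝ s t := hs t htmem
  -- V has derivative V₁ within s
  have hDV : HasDerivWithinAt V (iteratedDerivWithin 1 V s t) s t := by
    have := (hV.differentiableOn (by norm_num) t htmem).hasDerivWithinAt
    rwa [← iteratedDerivWithin_one] at this
  -- V₁ has derivative V₂ within s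
  have hDV1 : HasDerivWithinAt (iteratedDerivWithin 1 V s)
      (iteratedDerivWithin 2 V s t) s t := by
    have hdiff := (hV.differentiableOn_iteratedDerivWithin (m := 1)
      (by norm_num) hs) t htmem
    have h2 : iteratedDerivWithin 2 V s t
        = derivWithin (iteratedDerivWithin 1 V s) s t := by rw [iteratedDerivWithin_succ]
    rw [h2]
    exact hdiff.hasDerivWithinAt
  -- the RHS of the Lie quadratic equation has the expected derivative
  have hF : HasDerivWithinAt (fun u => cross (iteratedDerivWithin 1 V s u) (V u) + C)
      (cross (iteratedDerivWithin 2 V s t) (V t)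
        + cross (iteratedDerivWithin 1 V s t) (iteratedDerivWithin 1 V s t)) s t := by
    have hc : HasDerivWithinAt (fun u => crossCLM (iteratedDerivWithin 1 V s u))
        (crossCLM (iteratedDerivWithin 2 V s t)) s t :=
      crossCLM.hasFDerivAt.comp_hasDerivWithinAt t hDV1
    have := (hc.clm_apply hDV).add_const C
    simpa [crossCLM_apply] using this
  -- hence V₃ t is this derivative
  have hV3 : iteratedDerivWithin 3 V s t
      = cross (iteratedDerivWithin 2 V s t) (V t)
        + cross (iteratedDerivWithin 1 V s t) (iteratedDerivWithin 1 V s t) := by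
    have hcongr : HasDerivWithinAt (iteratedDerivWithin 2 V s)
        (cross (iteratedDerivWithin 2 V s t) (V t)
          + cross (iteratedDerivWithin 1 V s t) (iteratedDerivWithin 1 V s t)) s t :=
      hF.congr (fun u hu => hLQ u hu) (hLQ t htmem)
    rw [show iteratedDerivWithin 3 V s t
        = derivWithin (iteratedDerivWithin 2 V s) s t from
      by rw [iteratedDerivWithin_succ]]
    exact hcongr.derivWithin hst
  rw [hV3, hLQ t htmem]
  rw [← real_inner_self_eq_norm_sq]
  set a := iteratedDerivWithin 1 V s t
  set v := V t
  simp only [PiLp.inner_apply, RCLike.inner_apply, conj_trivial, Fin.sum_univ_three,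
    PiLp.add_apply, crossE3_apply, Matrix.cons_val_zero, Matrix.cons_val_one, Matrix.head_cons,
    Matrix.cons_val_two, Matrix.tail_cons]
  ring
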